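/- For every integer n ≥ 1, the product over j from 0 to n-1 of Γ((n+3+j)/2)·Γ(1/2) / (Γ((4+j)/2)·Γ((1+j)/2)·Γ((2+j)/2)), divided by n!, equals the product over k from 1 to n of the k-th Catalan number Cat(k) = (1/(k+1))·binomial(2k,k). -/

import Mathlib

open Real Finset

private lemma gne {x : ℝ} (hx : 0 < x) : Real.Gamma x ≠ 0 := (Real.Gamma_pos_of_pos hx).ne'

private lemma ratio (n : ℕ) :
    Gamma ((2 * (n : ℝ) + 3) / 2) * Gamma ((2 * (n : ℝ) + 4) / 2) * Gamma (1 / 2) =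
      (((n : ℝ) + 1) * (1 / ((n : ℝ) + 1 + 1) * (Nat.choose (2 * (n + 1)) (n + 1) : ℝ))) *
        (Gamma (((n : ℝ) + 3) / 2) *
          (Gamma ((4 + (n : ℝ)) / 2) * Gamma ((1 + (n : ℝ)) / 2) * Gamma ((2 + (n : ℝ)) / 2))) := by
  have hF : (n.factorial : ℝ) ≠ 0 := Nat.cast_ne_zero.mpr (Nat.factorial_ne_zero n)
  have h1 : Gamma ((2 * (n : ℝ) + 3) / 2) =
      ((2 * n + 1).factorial : ℝ) * (2 : ℝ) ^ (1 - (2 * (n : ℝ) + 2)) * √π / (n.factorial : ℝ) := by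
    rw [eq_div_iff hF]
    have h := Real.Gamma_mul_Gamma_add_half ((n : ℝ) + 1)
    rw [show (n : ℝ) + 1 + 1 / 2 = (2 * (n : ℝ) + 3) / 2 by ring,
      show 2 * ((n : ℝ) + 1) = ((2 * n + 1 : ℕ) : ℝ) + 1 by push_cast; ring,
      Real.Gamma_nat_eq_factorial, Real.Gamma_nat_eq_factorial,
      show (1 : ℝ) - (((2 * n + 1 : ℕ) : ℝ) + 1) = 1 - (2 * (n : ℝ) + 2) by push_cast; ring] at h
    linear_combination h
  have h2 : Gamma (((n : ℝ) + 3) / 2) * Gamma (((n : ℝ) + 4) / 2) =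
      ((n + 2).factorial : ℝ) * (2 : ℝ) ^ (1 - ((n : ℝ) + 3)) * √π := by
    have h := Real.Gamma_mul_Gamma_add_half (((n : ℝ) + 3) / 2)
    rw [show ((n : ℝ) + 3) / 2 + 1 / 2 = ((n : ℝ) + 4) / 2 by ring,
      show 2 * (((n : ℝ) + 3) / 2) = ((n + 2 : ℕ) : ℝ) + 1 by push_cast; ring,
      Real.Gamma_nat_eq_factorial,
      show (1 : ℝ) - (((n + 2 : ℕ) : ℝ) + 1) = 1 - ((n : ℝ) + 3) by push_cast; ring] at h
    exact h
  have h3 : Gamma (((n : ℝ) + 1) / 2) * Gamma (((n : ℝ) + 2) / 2) =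
      (n.factorial : ℝ) * (2 : ℝ) ^ (1 - ((n : ℝ) + 1)) * √π := by
    have h := Real.Gamma_mul_Gamma_add_half (((n : ℝ) + 1) / 2)
    rw [show ((n : ℝ) + 1) / 2 + 1 / 2 = ((n : ℝ) + 2) / 2 by ring,
      show 2 * (((n : ℝ) + 1) / 2) = ((n : ℕ) : ℝ) + 1 by push_cast; ring,
      Real.Gamma_nat_eq_factorial,
      show (1 : ℝ) - (((n : ℕ) : ℝ) + 1) = 1 - ((n : ℝ) + 1) by push_cast; ring] at h
    exact h
  have hpR : (2 : ℝ) ^ (1 - (2 * (n : ℝ) + 2)) =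
      (2 : ℝ) ^ (1 - ((n : ℝ) + 3)) * (2 : ℝ) ^ (1 - ((n : ℝ) + 1)) * 2 := by
    rw [show (1 : ℝ) - (2 * (n : ℝ) + 2) = (1 - ((n : ℝ) + 3)) + ((1 - ((n : ℝ) + 1)) + 1) by ring,
      Real.rpow_add two_pos, Real.rpow_add two_pos, Real.rpow_one]
    ring
  have hC : ((2 * (n + 1)).choose (n + 1) : ℝ) =
      (2 * (n : ℝ) + 2) * ((2 * n + 1).factorial : ℝ) /
        (((n : ℝ) + 1) * (n.factorial : ℝ) * (((n : ℝ) + 1) * (n.factorial : ℝ))) := by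
    rw [eq_div_iff (by positivity)]
    have hcn := Nat.choose_mul_factorial_mul_factorial (show n + 1 ≤ 2 * (n + 1) by omega)
    rw [show 2 * (n + 1) - (n + 1) = n + 1 by omega] at hcn
    have hfe : (2 * (n + 1)).factorial = (2 * n + 2) * (2 * n + 1).factorial := by
      rw [show 2 * (n + 1) = (2 * n + 1) + 1 by ring, Nat.factorial_succ]
    rw [hfe] at hcn
    have hcast := congrArg (Nat.cast (R := ℝ)) hcn
    push_cast [Nat.factorial_succ] at hcast
    have hff : ((2 * n + 1).factorial : ℝ) = (2 * (n : ℝ) + 1) * ((2 * n).factorial : ℝ) := by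
      push_cast [Nat.factorial_succ]; ring
    linear_combination hcast - 2 * ((n : ℝ) + 1) * hff
  have hprod : Gamma (((n : ℝ) + 3) / 2) *
      (Gamma (((n : ℝ) + 4) / 2) * Gamma (((n : ℝ) + 1) / 2) * Gamma (((n : ℝ) + 2) / 2)) =
      (((n + 2).factorial : ℝ) * (2 : ℝ) ^ (1 - ((n : ℝ) + 3)) * √π) *
        ((n.factorial : ℝ) * (2 : ℝ) ^ (1 - ((n : ℝ) + 1)) * √π) := by
    linear_combination (Gamma (((n : ℝ) + 1) / 2) * Gamma (((n : ℝ) + 2) / 2)) * h2 +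
      (((n + 2).factorial : ℝ) * (2 : ℝ) ^ (1 - ((n : ℝ) + 3)) * √π) * h3
  rw [show (4 + (n : ℝ)) / 2 = ((n : ℝ) + 4) / 2 by ring,
    show (1 + (n : ℝ)) / 2 = ((n : ℝ) + 1) / 2 by ring,
    show (2 + (n : ℝ)) / 2 = ((n : ℝ) + 2) / 2 by ring,
    show (2 * (n : ℝ) + 4) / 2 = ((n + 1 : ℕ) : ℝ) + 1 by push_cast; ring,
    Real.Gamma_nat_eq_factorial, Real.Gamma_one_half_eq, hprod, h1, hC, hpR]
  have h1' : ((n : ℝ) + 1) ≠ 0 := by positivity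
  have h2' : ((n : ℝ) + 1 + 1) ≠ 0 := by positivity
  push_cast [Nat.factorial_succ]
  field_simp

private lemma prod_succ (n : ℕ) :
    (∏ j ∈ Finset.range (n + 1),
        Gamma ((((n + 1 : ℕ) : ℝ) + 3 + j) / 2) * Gamma (1 / 2) /
          (Gamma ((4 + (j : ℝ)) / 2) * Gamma ((1 + (j : ℝ)) / 2) * Gamma ((2 + (j : ℝ)) / 2))) =
    (∏ j ∈ Finset.range n,
        Gamma (((n : ℝ) + 3 + j) / 2) * Gamma (1 / 2) /
          (Gamma ((4 + (j : ℝ)) / 2) * Gamma ((1 + (j : ℝ)) / 2) * Gamma ((2 + (j : ℝ)) / 2))) *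
      (Gamma ((2 * (n : ℝ) + 3) / 2) * Gamma ((2 * (n : ℝ) + 4) / 2) * Gamma (1 / 2) /
        (Gamma (((n : ℝ) + 3) / 2) *
          (Gamma ((4 + (n : ℝ)) / 2) * Gamma ((1 + (n : ℝ)) / 2) * Gamma ((2 + (n : ℝ)) / 2)))) := by
  have hnn : (0 : ℝ) ≤ (n : ℝ) := Nat.cast_nonneg n
  have hstep1 : (∏ j ∈ Finset.range (n + 1),
      Gamma ((((n + 1 : ℕ) : ℝ) + 3 + j) / 2) * Gamma (1 / 2) /
        (Gamma ((4 + (j : ℝ)) / 2) * Gamma ((1 + (j : ℝ)) / 2) * Gamma ((2 + (j : ℝ)) / 2))) =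
      ∏ j ∈ Finset.range (n + 1),
        Gamma (((n : ℝ) + 3 + ((j + 1 : ℕ) : ℝ)) / 2) * Gamma (1 / 2) /
          (Gamma ((4 + (j : ℝ)) / 2) * Gamma ((1 + (j : ℝ)) / 2) * Gamma ((2 + (j : ℝ)) / 2)) := by
    refine Finset.prod_congr rfl fun j _ => ?_
    rw [show (((n + 1 : ℕ) : ℝ) + 3 + j) / 2 = ((n : ℝ) + 3 + ((j + 1 : ℕ) : ℝ)) / 2 by
      push_cast; ring]
  have hkey : (∏ j ∈ Finset.range (n + 1), Gamma (((n : ℝ) + 3 + ((j + 1 : ℕ) : ℝ)) / 2)) =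
      (∏ j ∈ Finset.range n, Gamma (((n : ℝ) + 3 + (j : ℝ)) / 2)) *
        Gamma ((2 * (n : ℝ) + 3) / 2) * Gamma ((2 * (n : ℝ) + 4) / 2) /
          Gamma (((n : ℝ) + 3) / 2) := by
    have h := Finset.prod_range_succ' (fun j : ℕ => Gamma (((n : ℝ) + 3 + (j : ℝ)) / 2)) (n + 1)
    rw [Finset.prod_range_succ, Finset.prod_range_succ] at h
    have e1 : Gamma (((n : ℝ) + 3 + ((n : ℕ) : ℝ)) / 2) = Gamma ((2 * (n : ℝ) + 3) / 2) := by
      congr 1; push_cast; ring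
    have e2 : Gamma (((n : ℝ) + 3 + ((n + 1 : ℕ) : ℝ)) / 2) = Gamma ((2 * (n : ℝ) + 4) / 2) := by
      congr 1; push_cast; ring
    have e0 : Gamma (((n : ℝ) + 3 + ((0 : ℕ) : ℝ)) / 2) = Gamma (((n : ℝ) + 3) / 2) := by
      congr 1; push_cast; ring
    rw [e1, e2, e0] at h
    rw [eq_div_iff (gne (by positivity : (0:ℝ) < ((n : ℝ) + 3) / 2))]
    linear_combination -h
  rw [hstep1]
  simp only [Finset.prod_div_distrib, Finset.prod_mul_distrib, Finset.prod_const,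
    Finset.card_range]
  rw [hkey, pow_succ]
  simp only [Finset.prod_range_succ]
  ring

theorem stmt_0 (n : ℕ) (hn : 1 ≤ n) :
    (∏ j ∈ Finset.range n,
        Gamma (((n : ℝ) + 3 + j) / 2) * Gamma (1 / 2) /
          (Gamma ((4 + (j : ℝ)) / 2) * Gamma ((1 + (j : ℝ)) / 2) * Gamma ((2 + (j : ℝ)) / 2))) /
      (n.factorial : ℝ) =
    ∏ k ∈ Finset.Icc 1 n, (1 / ((k : ℝ) + 1) * (Nat.choose (2 * k) k : ℝ)) := by
  induction n, hn using Nat.le_induction with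
  | base =>
    rw [Finset.prod_range_one, show Finset.Icc 1 1 = {1} from rfl, Finset.prod_singleton]
    norm_num [Real.Gamma_one, Real.Gamma_one_half_eq]
    exact Real.sqrt_ne_zero'.mpr pi_pos
  | succ n hn ih =>
    rw [Finset.prod_Icc_succ_top (by omega : 1 ≤ n + 1), ← ih, prod_succ n, ratio n]
    have hnn : (0 : ℝ) ≤ (n : ℝ) := Nat.cast_nonneg n
    have hD : Gamma (((n : ℝ) + 3) / 2) *
        (Gamma ((4 + (n : ℝ)) / 2) * Gamma ((1 + (n : ℝ)) / 2) * Gamma ((2 + (n : ℝ)) / 2)) ≠ 0 := by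
      apply mul_ne_zero (gne (by positivity))
      exact mul_ne_zero (mul_ne_zero (gne (by positivity)) (gne (by positivity)))
        (gne (by positivity))
    have hfs : ((n + 1).factorial : ℝ) = ((n : ℝ) + 1) * (n.factorial : ℝ) := by
      push_cast [Nat.factorial_succ]; ring
    rw [hfs]
    have h1 : ((n : ℝ) + 1) ≠ 0 := by positivity
    have h12 : ((n : ℝ) + 1 + 1) ≠ 0 := by positivity
    have h2 : (n.factorial : ℝ) ≠ 0 := Nat.cast_ne_zero.mpr (Nat.factorial_ne_zero n)
    push_cast
    field_simp [hD]
    rw [mul_comm]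
    congr 1
    exact Finset.prod_congr rfl fun x _ => by ring
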